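/- arXiv:1512.06682 — 4 statements merged into one kernel-verified Lean document; each statement's English description precedes it below -/
import Mathlib

section
/- Let K, L, m, j be integers with 1 ≤ L ≤ K-1, 1 ≤ m ≤ K-1, max(m-L+1, 0) ≤ j ≤ min(K-L, m+1) - 1, so that both binomial products below are over valid ranges. Then C(K-L, j) * C(L-1, m-j) ≥ C(K-L-1, j) * C(L, m-j) if and only if j ≥ m * (1 - L/K), i.e., if and only if j*K ≥ m*(K-L). -/
/-- Key step in Proposition 1: for `max(m-L+1,0) ≤ j ≤ min(K-L, m+1) - 1`
(encoded additively over ℕ), one has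
`C(K-L, j) * C(L-1, m-j) ≥ C(K-L-1, j) * C(L, m-j)` iff `j*K ≥ m*(K-L)`,
i.e. iff `j ≥ m (1 - L/K)`. -/
theorem stmt_3 (K L m j : ℕ) (hL : 1 ≤ L) (hL' : L ≤ K - 1)
    (hm : 1 ≤ m) (hm' : m ≤ K - 1)
    (hj1 : m + 1 ≤ j + L) (hj2 : j + 1 ≤ K - L) (hj3 : j ≤ m) :
    (K - L - 1).choose j * L.choose (m - j) ≤ (K - L).choose j * (L - 1).choose (m - j) ↔
      m * (K - L) ≤ j * K := by
  set n := K - L with hn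
  have hn1 : 1 ≤ n := by omega
  have hK : K = n + L := by omega
  have h1 : (n-1).choose j * n = n.choose j * (n - j) := by
    have h := Nat.choose_mul_succ_eq (n-1) j
    rwa [Nat.sub_add_cancel hn1] at h
  have h2 : (L-1).choose (m-j) * L = L.choose (m-j) * (L - (m-j)) := by
    have h := Nat.choose_mul_succ_eq (L-1) (m-j)
    rwa [Nat.sub_add_cancel hL] at h
  have hA : 0 < n.choose j := Nat.choose_pos (by omega)
  have hB : 0 < L.choose (m-j) := Nat.choose_pos (by omega)
  have key : (n-1).choose j * L.choose (m - j) ≤ n.choose j * (L-1).choose (m-j) ↔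
      (n - j) * L ≤ (L - (m - j)) * n := by
    rw [← mul_le_mul_iff_of_pos_right (show 0 < n * L by positivity)]
    have e1 : (n-1).choose j * L.choose (m - j) * (n * L)
        = (n.choose j * L.choose (m-j)) * ((n - j) * L) := by
      calc (n-1).choose j * L.choose (m - j) * (n * L)
          = ((n-1).choose j * n) * (L.choose (m-j) * L) := by ring
        _ = (n.choose j * (n - j)) * (L.choose (m-j) * L) := by rw [h1]
        _ = (n.choose j * L.choose (m-j)) * ((n - j) * L) := by ring
    have e2 : n.choose j * (L-1).choose (m-j) * (n * L)
        = (n.choose j * L.choose (m-j)) * ((L - (m - j)) * n) := by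
      calc n.choose j * (L-1).choose (m-j) * (n * L)
          = ((L-1).choose (m-j) * L) * (n.choose j * n) := by ring
        _ = (L.choose (m-j) * (L - (m-j))) * (n.choose j * n) := by rw [h2]
        _ = (n.choose j * L.choose (m-j)) * ((L - (m - j)) * n) := by ring
    rw [e1, e2, mul_le_mul_iff_of_pos_left (by positivity)]
  rw [key]
  zify [show j ≤ n by omega, show m - j ≤ L by omega, hj3]
  rw [hK]
  push_cast
  constructor <;> intro h <;> nlinarith [h]
end

section
/- Let K, L, m be integers with 1 ≤ m ≤ K-1 and 1 ≤ L ≤ K-1. Define f(j) = sum_{i = max(0, m-L+1)}^{min(j-1, K-L)} C(K-L, i)*C(L-1, m-i) + sum_{i = max(j, m-L)}^{min(m, K-L-1)} C(K-L-1, i)*C(L, m-i) for integers 0 ≤ j ≤ m+1. Then f attains its minimum over {0, 1, ..., m+1} at j = ⌈m(K-L)/K⌉. -/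
open Finset

private lemma chooseId (n k : ℕ) (hn : 1 ≤ n) :
    n * (n - 1).choose k = n.choose k * (n - k) := by
  obtain ⟨n, rfl⟩ := Nat.exists_eq_succ_of_ne_zero (by omega : n ≠ 0)
  simpa using (Nat.add_one_mul_choose_eq n k).trans (Nat.choose_succ_right_eq (n + 1) k)

private lemma keyId (a L m j : ℕ) (ha : 1 ≤ a) (hL : 1 ≤ L) :
    (L * (a - j)) * (a.choose j * (L - 1).choose (m - j))
      = (a * (L - (m - j))) * ((a - 1).choose j * L.choose (m - j)) := by
  have h1 := chooseId a j ha
  have h2 := chooseId L (m - j) hL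
  calc (L * (a - j)) * (a.choose j * (L - 1).choose (m - j))
      = (a.choose j * (a - j)) * (L * (L - 1).choose (m - j)) := by ring
    _ = (a * (a - 1).choose j) * (L.choose (m - j) * (L - (m - j))) := by rw [← h1, h2]
    _ = (a * (L - (m - j))) * ((a - 1).choose j * L.choose (m - j)) := by ring

private lemma B_le_A (a L m j : ℕ) (ha : 1 ≤ a) (hL : 1 ≤ L)
    (hja : j + 1 ≤ a) (hmj : m ≤ L + j) (h : m * a ≤ (a + L) * j) :
    (a - 1).choose j * L.choose (m - j) ≤ a.choose j * (L - 1).choose (m - j) := by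
  have hcoef : L * (a - j) ≤ a * (L - (m - j)) := by
    rcases le_or_gt m j with hmle | hlt
    · have hz : m - j = 0 := by omega
      rw [hz, Nat.sub_zero]
      calc L * (a - j) ≤ L * a := Nat.mul_le_mul_left _ (Nat.sub_le _ _)
        _ = a * L := Nat.mul_comm _ _
    · zify [show j ≤ a by omega, show m - j ≤ L by omega, hlt.le]
      have h' : (m : ℤ) * a ≤ ((a : ℤ) + L) * j := by exact_mod_cast h
      nlinarith [h']
  have pos : 0 < L * (a - j) := Nat.mul_pos hL (by omega)
  have hid := keyId a L m j ha hL
  have hmul : (L * (a - j)) * ((a - 1).choose j * L.choose (m - j))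
      ≤ (L * (a - j)) * (a.choose j * (L - 1).choose (m - j)) := by
    rw [hid]
    exact Nat.mul_le_mul_right _ hcoef
  exact Nat.le_of_mul_le_mul_left hmul pos

private lemma A_le_B (a L m j : ℕ) (ha : 1 ≤ a) (hL : 1 ≤ L)
    (hja : j + 1 ≤ a) (hjm : j + 1 ≤ m) (hmj : m ≤ L + j) (h : (a + L) * j ≤ m * a) :
    a.choose j * (L - 1).choose (m - j) ≤ (a - 1).choose j * L.choose (m - j) := by
  have hcoef : a * (L - (m - j)) ≤ L * (a - j) := by
    zify [show j ≤ a by omega, show m - j ≤ L by omega, show j ≤ m by omega]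
    have h' : ((a : ℤ) + L) * j ≤ (m : ℤ) * a := by exact_mod_cast h
    nlinarith [h']
  have pos : 0 < L * (a - j) := Nat.mul_pos hL (by omega)
  have hid := keyId a L m j ha hL
  have hmul : (L * (a - j)) * (a.choose j * (L - 1).choose (m - j))
      ≤ (L * (a - j)) * ((a - 1).choose j * L.choose (m - j)) := by
    rw [hid]
    exact Nat.mul_le_mul_right _ hcoef
  exact Nat.le_of_mul_le_mul_left hmul pos

private lemma aux_up_contra (a L j : ℕ) (hL : 1 ≤ L) (hja : j + 1 ≤ a)
    (h : (j + L) * a ≤ (a + L) * j) : False := by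
  have h1 : (1 : ℤ) ≤ L := by exact_mod_cast hL
  have h2 : (j : ℤ) + 1 ≤ a := by exact_mod_cast hja
  have h3 : ((j : ℤ) + L) * a ≤ ((a : ℤ) + L) * j := by exact_mod_cast h
  nlinarith [h1, h2, h3]

private lemma aux_jm (a L m j : ℕ) (hmk : m + 1 ≤ a + L) (h : (a + L) * j < m * a) :
    j + 1 ≤ m ∧ j + 1 ≤ a := by
  constructor
  · by_contra hc
    push_neg at hc
    have h1 : (a + L) * m ≤ (a + L) * j := Nat.mul_le_mul_left _ (by omega)
    have h2 : m * a ≤ m * (a + L) := Nat.mul_le_mul_left _ (by omega)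
    have h3 : m * (a + L) = (a + L) * m := Nat.mul_comm _ _
    omega
  · by_contra hc
    push_neg at hc
    have h1 : (a + L) * a ≤ (a + L) * j := Nat.mul_le_mul_left _ (by omega)
    have h2 : (m + 1) * a ≤ (a + L) * a := Nat.mul_le_mul_right _ hmk
    have h3 : (m + 1) * a = m * a + a := by ring
    omega

private lemma lt_ceil (K q j : ℕ) (hK : 1 ≤ K) (hj : j < (q + (K - 1)) / K) :
    K * j < q := by
  have h := Nat.div_add_mod (q + (K - 1)) K
  have hr := Nat.mod_lt (q + (K - 1)) (show 0 < K by omega)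
  have h1 : K * (j + 1) ≤ K * ((q + (K - 1)) / K) := Nat.mul_le_mul_left _ hj
  have h2 : K * (j + 1) = K * j + K := by ring
  omega

private lemma ceil_le (K q : ℕ) (hK : 1 ≤ K) : q ≤ K * ((q + (K - 1)) / K) := by
  have h := Nat.div_add_mod (q + (K - 1)) K
  have hr := Nat.mod_lt (q + (K - 1)) (show 0 < K by omega)
  omega

private lemma step_up (a L m j : ℕ) (ha : 1 ≤ a) (hL : 1 ≤ L) (hmk : m + 1 ≤ a + L)
    (h : m * a ≤ (a + L) * j) :
    (∑ i ∈ Ico (m + 1 - L) (min j (a + 1)), a.choose i * (L - 1).choose (m - i))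
      + (∑ i ∈ Icc (max j (m - L)) (min m (a - 1)), (a - 1).choose i * L.choose (m - i))
    ≤ (∑ i ∈ Ico (m + 1 - L) (min (j + 1) (a + 1)), a.choose i * (L - 1).choose (m - i))
      + ∑ i ∈ Icc (max (j + 1) (m - L)) (min m (a - 1)), (a - 1).choose i * L.choose (m - i) := by
  have hS1 : (∑ i ∈ Ico (m + 1 - L) (min j (a + 1)), a.choose i * (L - 1).choose (m - i))
      ≤ ∑ i ∈ Ico (m + 1 - L) (min (j + 1) (a + 1)), a.choose i * (L - 1).choose (m - i) :=
    Finset.sum_le_sum_of_subset (Finset.Ico_subset_Ico le_rfl (by omega))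
  by_cases hc1 : j + 1 ≤ m - L
  · have e : max (j + 1) (m - L) = max j (m - L) := by omega
    rw [e]
    exact Nat.add_le_add_right hS1 _
  by_cases hc2 : min m (a - 1) < j
  · have e : Icc (max j (m - L)) (min m (a - 1)) = ∅ := Finset.Icc_eq_empty (by omega)
    rw [e, Finset.sum_empty]
    exact Nat.add_le_add hS1 (Nat.zero_le _)
  push_neg at hc1 hc2
  have hja : j + 1 ≤ a := by omega
  have e2 : Icc (max j (m - L)) (min m (a - 1))
      = insert j (Icc (max (j + 1) (m - L)) (min m (a - 1))) := by
    rw [max_eq_left (by omega), max_eq_left (by omega), Finset.Icc_add_one_left_eq_Ioc]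
    exact (Finset.Ioc_insert_left (by omega)).symm
  rw [e2, Finset.sum_insert (by simp only [Finset.mem_Icc]; omega)]
  by_cases hc3 : m + 1 - L ≤ j
  · have e1 : min (j + 1) (a + 1) = j + 1 := by omega
    have e1' : min j (a + 1) = j := by omega
    rw [e1, e1', Finset.sum_Ico_succ_top hc3]
    have hBA := B_le_A a L m j ha hL hja (by omega) h
    omega
  · exfalso
    have hm2 : m = j + L := by omega
    rw [hm2] at h
    exact aux_up_contra a L j hL hja h

private lemma step_down (a L m j : ℕ) (ha : 1 ≤ a) (hL : 1 ≤ L) (hmk : m + 1 ≤ a + L)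
    (h : (a + L) * j < m * a) :
    (∑ i ∈ Ico (m + 1 - L) (min (j + 1) (a + 1)), a.choose i * (L - 1).choose (m - i))
      + (∑ i ∈ Icc (max (j + 1) (m - L)) (min m (a - 1)), (a - 1).choose i * L.choose (m - i))
    ≤ (∑ i ∈ Ico (m + 1 - L) (min j (a + 1)), a.choose i * (L - 1).choose (m - i))
      + ∑ i ∈ Icc (max j (m - L)) (min m (a - 1)), (a - 1).choose i * L.choose (m - i) := by
  have hS2 : (∑ i ∈ Icc (max (j + 1) (m - L)) (min m (a - 1)), (a - 1).choose i * L.choose (m - i))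
      ≤ ∑ i ∈ Icc (max j (m - L)) (min m (a - 1)), (a - 1).choose i * L.choose (m - i) :=
    Finset.sum_le_sum_of_subset (Finset.Icc_subset_Icc (by omega) le_rfl)
  obtain ⟨hjm, hja⟩ := aux_jm a L m j hmk h
  by_cases hc3 : m + 1 - L ≤ j
  · have e1 : min (j + 1) (a + 1) = j + 1 := by omega
    have e1' : min j (a + 1) = j := by omega
    have e2 : Icc (max j (m - L)) (min m (a - 1))
        = insert j (Icc (max (j + 1) (m - L)) (min m (a - 1))) := by
      rw [max_eq_left (by omega), max_eq_left (by omega), Finset.Icc_add_one_left_eq_Ioc]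
      exact (Finset.Ioc_insert_left (by omega)).symm
    rw [e1, e1', Finset.sum_Ico_succ_top hc3, e2,
      Finset.sum_insert (by simp only [Finset.mem_Icc]; omega)]
    have hAB := A_le_B a L m j ha hL hja hjm (by omega) h.le
    omega
  · have e1 : Ico (m + 1 - L) (min (j + 1) (a + 1)) = ∅ := Finset.Ico_eq_empty (by omega)
    have e1' : Ico (m + 1 - L) (min j (a + 1)) = ∅ := Finset.Ico_eq_empty (by omega)
    rw [e1, e1', Finset.sum_empty]
    exact Nat.add_le_add le_rfl hS2

private lemma main_aux (a L m : ℕ) (ha : 1 ≤ a) (hL : 1 ≤ L) (hmk : m + 1 ≤ a + L) (j : ℕ) :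
    (∑ i ∈ Ico (m + 1 - L) (min ((m * a + (a + L - 1)) / (a + L)) (a + 1)),
        a.choose i * (L - 1).choose (m - i))
      + (∑ i ∈ Icc (max ((m * a + (a + L - 1)) / (a + L)) (m - L)) (min m (a - 1)),
        (a - 1).choose i * L.choose (m - i))
    ≤ (∑ i ∈ Ico (m + 1 - L) (min j (a + 1)), a.choose i * (L - 1).choose (m - i))
      + ∑ i ∈ Icc (max j (m - L)) (min m (a - 1)), (a - 1).choose i * L.choose (m - i) := by
  set F : ℕ → ℕ := fun j =>
    (∑ i ∈ Ico (m + 1 - L) (min j (a + 1)), a.choose i * (L - 1).choose (m - i))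
      + ∑ i ∈ Icc (max j (m - L)) (min m (a - 1)), (a - 1).choose i * L.choose (m - i) with hF
  set js := (m * a + (a + L - 1)) / (a + L) with hjs
  have hK : 1 ≤ a + L := by omega
  have hceil : m * a ≤ (a + L) * js := ceil_le (a + L) (m * a) hK
  show F js ≤ F j
  have hup : ∀ d, F js ≤ F (js + d) := by
    intro d
    induction d with
    | zero => simp
    | succ d ih =>
      refine ih.trans ?_
      have hstep : m * a ≤ (a + L) * (js + d) :=
        hceil.trans (Nat.mul_le_mul_left _ (by omega))
      exact step_up a L m (js + d) ha hL hmk hstep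
  have hdown : ∀ d jj, jj + d = js → F js ≤ F jj := by
    intro d
    induction d with
    | zero => intro jj hjj; simp [← hjj]
    | succ d ih =>
      intro jj hjj
      have hlt : (a + L) * jj < m * a := lt_ceil (a + L) (m * a) jj hK (by omega)
      have h1 := step_down a L m jj ha hL hmk hlt
      have h2 := ih (jj + 1) (by omega)
      exact h2.trans h1
  rcases le_or_gt j js with hle | hgt
  · exact hdown (js - j) j (by omega)
  · have := hup (j - js)
    rwa [show js + (j - js) = j by omega] at this

/-- Proposition 1: the message count
`f(j) = ∑_{i=max(0,m-L+1)}^{min(j-1,K-L)} C(K-L,i) C(L-1,m-i)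
      + ∑_{i=max(j,m-L)}^{min(m,K-L-1)} C(K-L-1,i) C(L,m-i)`
is minimized over `0 ≤ j ≤ m+1` at `j = ⌈m(K-L)/K⌉`.
(The first sum is written as an `Ico`: `i ≥ m+1-L` and `i < min(j, K-L+1)`,
which is the same index range as `max(0,m-L+1) ≤ i ≤ min(j-1, K-L)`.) -/
theorem stmt_4 (K L m : ℕ) (hm : 1 ≤ m) (hm' : m ≤ K - 1) (hL : 1 ≤ L) (hL' : L ≤ K - 1)
    (f : ℕ → ℕ)
    (hf : ∀ j, f j =
      (∑ i ∈ Finset.Ico (m + 1 - L) (min j (K - L + 1)),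
        (K - L).choose i * (L - 1).choose (m - i))
      + ∑ i ∈ Finset.Icc (max j (m - L)) (min m (K - L - 1)),
        (K - L - 1).choose i * L.choose (m - i)) :
    ∀ j ≤ m + 1, f ((m * (K - L) + (K - 1)) / K) ≤ f j := by
  have hK : L + 1 ≤ K := by omega
  obtain ⟨a, rfl⟩ : ∃ a, K = a + L := ⟨K - L, by omega⟩
  have ha : 1 ≤ a := by omega
  have hmk : m + 1 ≤ a + L := by omega
  simp only [Nat.add_sub_cancel] at hf ⊢
  intro j _
  rw [hf, hf]
  exact main_aux a L m ha hL hmk j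
end

section
/- For every integer K ≥ 2, every integer m with 1 ≤ m ≤ K-1, and every integer L with 1 ≤ L ≤ K-1, there exists an integer j with 0 ≤ j ≤ m+1 such that R_K(m/K, L, j) ≤ 2 - m/K, where R_K(m/K, L, j) = 1 + [sum_{i = max(0, m-L+1)}^{min(j-1, K-L)} C(K-L, i)*C(L-1, m-i) + sum_{i = max(j, m-L)}^{min(m, K-L-1)} C(K-L-1, i)*C(L, m-i)] / C(K, m). Moreover the inequality is strict unless K is odd and m = K-1. -/
open Finset

private lemma sub_mul_choose (n k : ℕ) (hn : 1 ≤ n) :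
    n.choose k * (n - k) = n * (n - 1).choose k := by
  have h := Nat.add_one_mul_choose_eq (n - 1) k
  have h2 := Nat.choose_succ_right_eq n k
  have hs : n - 1 + 1 = n := by omega
  rw [hs] at h
  rw [h]
  exact h2.symm

private lemma vandermonde_range (p q k : ℕ) :
    (p + q).choose k = ∑ i ∈ range (k + 1), p.choose i * q.choose (k - i) := by
  rw [Nat.add_choose_eq, Finset.Nat.sum_antidiagonal_eq_sum_range_succ_mk]

section core

variable (K m L : ℕ)

private def aa (i : ℕ) : ℕ := (K - L).choose i * (L - 1).choose (m - i)
private def bb (i : ℕ) : ℕ := (K - L - 1).choose i * L.choose (m - i)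

variable {K m L}
variable (hK : 2 ≤ K) (hm : 1 ≤ m) (hm' : m ≤ K - 1) (hL : 1 ≤ L) (hL' : L ≤ K - 1)

include hK hm hm' hL hL'

private lemma key_id {i : ℕ} (hi : i ≤ m) :
    ((L : ℤ) * ((K : ℤ) - L - i)) * (aa K m L i) =
      (((K : ℤ) - L) * ((i : ℤ) + L - m)) * (bb K m L i) := by
  unfold aa bb
  by_cases h1 : K - L < i
  · rw [Nat.choose_eq_zero_of_lt h1, Nat.choose_eq_zero_of_lt (by omega : K - L - 1 < i)]
    push_cast; ring
  by_cases h2 : L < m - i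
  · rw [Nat.choose_eq_zero_of_lt (by omega : L - 1 < m - i), Nat.choose_eq_zero_of_lt h2]
    push_cast; ring
  -- now i ≤ K - L and m - i ≤ L
  have e1 : (K - L).choose i * (K - L - i) = (K - L) * (K - L - 1).choose i :=
    sub_mul_choose (K - L) i (by omega)
  have e2 : L.choose (m - i) * (L - (m - i)) = L * (L - 1).choose (m - i) :=
    sub_mul_choose L (m - i) hL
  have e1' : ((K - L).choose i : ℤ) * ((K : ℤ) - L - i)
      = ((K : ℤ) - L) * ((K - L - 1).choose i : ℤ) := by
    zify [show i ≤ K - L by omega, show L ≤ K by omega] at e1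
    linear_combination e1
  have e2' : ((L).choose (m - i) : ℤ) * ((L : ℤ) - ((m : ℤ) - i))
      = (L : ℤ) * ((L - 1).choose (m - i) : ℤ) := by
    zify [show m - i ≤ L by omega, show i ≤ m by omega] at e2
    linear_combination e2
  push_cast
  linear_combination ((L : ℤ) * ((L - 1).choose (m - i) : ℤ)) * e1'
    - (((K : ℤ) - L) * ((K - L - 1).choose i : ℤ)) * e2'

private lemma hab1 {i : ℕ} (hiq : K * i ≤ (K - L) * m) :
    aa K m L i ≤ bb K m L i := by
  have him : i ≤ m := by
    have h1 : (K - L) * m ≤ K * m := Nat.mul_le_mul_right m (Nat.sub_le K L)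
    have h2 : K * i ≤ K * m := le_trans hiq h1
    exact Nat.le_of_mul_le_mul_left h2 (by omega)
  have hiKL : i < K - L := by
    by_contra h
    push_neg at h
    have h1 : K * (K - L) ≤ K * i := Nat.mul_le_mul_left K h
    have h2 : (K - L) * m ≤ (K - L) * (K - 1) := Nat.mul_le_mul_left (K - L) hm'
    have h3 : K * (K - L) ≤ (K - L) * (K - 1) := le_trans (le_trans h1 hiq) h2
    rw [mul_comm] at h3
    have h4 := Nat.le_of_mul_le_mul_left h3 (show 0 < K - L by omega)
    omega
  have hid := key_id hK hm hm' hL hL' him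
  zify [show L ≤ K by omega] at hiq
  have hα : (0 : ℤ) < (L : ℤ) * ((K : ℤ) - L - i) := by
    have h1 : (0 : ℤ) < (K : ℤ) - L - i := by omega
    positivity
  have hβα : ((K : ℤ) - L) * ((i : ℤ) + L - m) ≤ (L : ℤ) * ((K : ℤ) - L - i) := by
    nlinarith [hiq]
  have hbnn : (0 : ℤ) ≤ (bb K m L i : ℤ) := Int.natCast_nonneg _
  have h3 : ((K : ℤ) - L) * ((i : ℤ) + L - m) * (bb K m L i : ℤ)
      ≤ (L : ℤ) * ((K : ℤ) - L - i) * (bb K m L i : ℤ) :=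
    mul_le_mul_of_nonneg_right hβα hbnn
  have : (aa K m L i : ℤ) ≤ (bb K m L i : ℤ) := by nlinarith [hid, h3, hα]
  exact_mod_cast this

private lemma hba1 {i : ℕ} (hiq : (K - L) * m < K * i) (him : i ≤ m) :
    bb K m L i ≤ aa K m L i := by
  by_cases hbig : K - L - 1 < i
  · unfold bb
    rw [Nat.choose_eq_zero_of_lt hbig]
    simp
  push_neg at hbig
  have hid := key_id hK hm hm' hL hL' him
  zify [show L ≤ K by omega] at hiq
  have hα : (0 : ℤ) < (L : ℤ) * ((K : ℤ) - L - i) := by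
    have h1 : (0 : ℤ) < (K : ℤ) - L - i := by omega
    positivity
  have hβα : (L : ℤ) * ((K : ℤ) - L - i) ≤ ((K : ℤ) - L) * ((i : ℤ) + L - m) := by
    nlinarith [hiq]
  have hβ : (0 : ℤ) < ((K : ℤ) - L) * ((i : ℤ) + L - m) := lt_of_lt_of_le hα hβα
  have hann : (0 : ℤ) ≤ (aa K m L i : ℤ) := Int.natCast_nonneg _
  have h3 : (L : ℤ) * ((K : ℤ) - L - i) * (aa K m L i : ℤ)
      ≤ ((K : ℤ) - L) * ((i : ℤ) + L - m) * (aa K m L i : ℤ) :=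
    mul_le_mul_of_nonneg_right hβα hann
  have : (bb K m L i : ℤ) ≤ (aa K m L i : ℤ) := by nlinarith [hid, h3, hβ]
  exact_mod_cast this

private lemma hsum_a : ∑ i ∈ range (m + 1), aa K m L i = (K - 1).choose m := by
  have h := vandermonde_range (K - L) (L - 1) m
  rw [show K - L + (L - 1) = K - 1 by omega] at h
  exact h.symm

private lemma hsum_b : ∑ i ∈ range (m + 1), bb K m L i = (K - 1).choose m := by
  have h := vandermonde_range (K - L - 1) L m
  rw [show K - L - 1 + L = K - 1 by omega] at h
  exact h.symm

private lemma core_lt :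
    ∑ i ∈ range ((K - L) * m / K + 1), aa K m L i
      + ∑ i ∈ Icc ((K - L) * m / K + 1) m, bb K m L i < (K - 1).choose m := by
  set q := (K - L) * m / K with hq
  have hK0 : 0 < K := by omega
  have hqm : q ≤ m := by
    calc (K - L) * m / K ≤ K * m / K :=
          Nat.div_le_div_right (Nat.mul_le_mul_right m (Nat.sub_le K L))
      _ = m := Nat.mul_div_cancel_left m hK0
  have hab' : ∀ i ∈ range (q + 1), aa K m L i ≤ bb K m L i := by
    intro i hi
    rw [mem_range] at hi
    have h1 : i ≤ q := by omega
    have h2 : i * K ≤ (K - L) * m := (Nat.le_div_iff_mul_le hK0).1 (h1.trans (le_refl q))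
    exact hab1 hK hm hm' hL hL' (by rw [mul_comm K i]; exact h2)
  have hba' : ∀ i ∈ Icc (q + 1) m, bb K m L i ≤ aa K m L i := by
    intro i hi
    rw [mem_Icc] at hi
    have h2 : (K - L) * m < i * K := (Nat.div_lt_iff_lt_mul hK0).1 (by omega)
    exact hba1 hK hm hm' hL hL' (by rw [mul_comm K i]; exact h2) hi.2
  have hsplit : ∀ f : ℕ → ℕ,
      ∑ i ∈ range (q + 1), f i + ∑ i ∈ Icc (q + 1) m, f i = ∑ i ∈ range (m + 1), f i := by
    intro f
    rw [Finset.range_eq_Ico, ← Finset.Ico_add_one_right_eq_Icc, Finset.range_eq_Ico]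
    exact Finset.sum_Ico_consecutive f (Nat.zero_le _) (Nat.succ_le_succ hqm)
  have hKeq : ∀ i, i ≤ m → aa K m L i ≠ 0 → aa K m L i = bb K m L i → K * i = (K - L) * m := by
    intro i him hne habeq
    have hid := key_id hK hm hm' hL hL' him
    rw [habeq] at hid
    have hbne : (bb K m L i : ℤ) ≠ 0 := by
      rw [← habeq]
      exact_mod_cast hne
    have hαβ : (L : ℤ) * ((K : ℤ) - L - i) = ((K : ℤ) - L) * ((i : ℤ) + L - m) :=
      mul_right_cancel₀ hbne hid
    have hZ : ((K : ℤ) - L) * m = (K : ℤ) * i := by linear_combination hαβ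
    zify [show L ≤ K by omega]
    linarith [hZ]
  have hex : ∃ i0, i0 ≤ m ∧ aa K m L i0 ≠ bb K m L i0 := by
    by_contra hcon
    push_neg at hcon
    have hNpos : 0 < (K - 1).choose m := Nat.choose_pos (by omega)
    have hsa := hsum_a hK hm hm' hL hL' (K := K) (m := m) (L := L)
    obtain ⟨i1, hi1mem, hi1⟩ : ∃ i1 ∈ range (m + 1), aa K m L i1 ≠ 0 := by
      by_contra h
      push_neg at h
      rw [Finset.sum_eq_zero h] at hsa
      omega
    rw [mem_range] at hi1mem
    have hi1m : i1 ≤ m := by omega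
    have heq : K * i1 = (K - L) * m := hKeq i1 hi1m hi1 (hcon i1 hi1m)
    have h1 : i1 ≤ K - L := by
      by_contra h
      push_neg at h
      apply hi1
      unfold aa
      rw [Nat.choose_eq_zero_of_lt h, Nat.zero_mul]
    have h2 : m - i1 ≤ L - 1 := by
      by_contra h
      push_neg at h
      apply hi1
      unfold aa
      rw [Nat.choose_eq_zero_of_lt h, Nat.mul_zero]
    have hi1lt : i1 < m := by
      rcases Nat.lt_or_ge i1 m with h | h
      · exact h
      · exfalso
        have him : i1 = m := le_antisymm hi1m h
        rw [him] at heq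
        zify [show L ≤ K by omega] at heq
        have e1 : (0 : ℤ) < (L : ℤ) := by omega
        have e2 : (0 : ℤ) < (m : ℤ) := by omega
        nlinarith [heq, mul_pos e1 e2]
    have hi1lt2 : i1 < K - L := by
      rcases Nat.lt_or_ge i1 (K - L) with h | h
      · exact h
      · exfalso
        have hikl : i1 = K - L := le_antisymm h1 h
        rw [hikl] at heq
        zify [show L ≤ K by omega] at heq
        have e1 : (0 : ℤ) < (K : ℤ) - L := by omega
        have e2 : (0 : ℤ) < (K : ℤ) - m := by omega
        nlinarith [heq, mul_pos e1 e2]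
    have hne2 : aa K m L (i1 + 1) ≠ 0 := by
      unfold aa
      have c1 : 0 < (K - L).choose (i1 + 1) := Nat.choose_pos (by omega)
      have c2 : 0 < (L - 1).choose (m - (i1 + 1)) := Nat.choose_pos (by omega)
      positivity
    have heq2 : K * (i1 + 1) = (K - L) * m :=
      hKeq (i1 + 1) (by omega) hne2 (hcon (i1 + 1) (by omega))
    have hr : K * (i1 + 1) = K * i1 + K := by ring
    omega
  obtain ⟨i0, hi0m, hi0ne⟩ := hex
  have hsa := hsum_a hK hm hm' hL hL' (K := K) (m := m) (L := L)
  have hsb := hsum_b hK hm hm' hL hL' (K := K) (m := m) (L := L)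
  rcases le_or_gt i0 q with h | h
  · have hmem : i0 ∈ range (q + 1) := mem_range.2 (by omega)
    have hlt : aa K m L i0 < bb K m L i0 :=
      lt_of_le_of_ne (hab' i0 hmem) hi0ne
    have hstep : ∑ i ∈ range (q + 1), aa K m L i < ∑ i ∈ range (q + 1), bb K m L i :=
      Finset.sum_lt_sum hab' ⟨i0, hmem, hlt⟩
    have := hsplit (bb K m L)
    omega
  · have hmem : i0 ∈ Icc (q + 1) m := mem_Icc.2 ⟨by omega, hi0m⟩
    have hlt : bb K m L i0 < aa K m L i0 :=
      lt_of_le_of_ne (hba' i0 hmem) (fun hc => hi0ne hc.symm)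
    have hstep : ∑ i ∈ Icc (q + 1) m, bb K m L i < ∑ i ∈ Icc (q + 1) m, aa K m L i :=
      Finset.sum_lt_sum hba' ⟨i0, hmem, hlt⟩
    have := hsplit (aa K m L)
    omega

end core

/-- Proposition 2: there exists a threshold `0 ≤ j ≤ m+1` with
`R_K(m/K, L, j) ≤ 2 - m/K`, with strict inequality unless `K` is odd and
`m = K-1`. -/
theorem stmt_9 (K m L : ℕ) (hK : 2 ≤ K) (hm : 1 ≤ m) (hm' : m ≤ K - 1)
    (hL : 1 ≤ L) (hL' : L ≤ K - 1) :
    ∃ j ≤ m + 1,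
      (1 : ℚ) +
        (((∑ i ∈ Finset.Ico (m + 1 - L) (min j (K - L + 1)),
            (K - L).choose i * (L - 1).choose (m - i))
          + ∑ i ∈ Finset.Icc (max j (m - L)) (min m (K - L - 1)),
            (K - L - 1).choose i * L.choose (m - i) : ℕ) : ℚ) / (K.choose m)
        ≤ 2 - (m : ℚ) / K ∧
      (¬(Odd K ∧ m = K - 1) →
        (1 : ℚ) +
          (((∑ i ∈ Finset.Ico (m + 1 - L) (min j (K - L + 1)),
              (K - L).choose i * (L - 1).choose (m - i))
            + ∑ i ∈ Finset.Icc (max j (m - L)) (min m (K - L - 1)),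
              (K - L - 1).choose i * L.choose (m - i) : ℕ) : ℚ) / (K.choose m)
          < 2 - (m : ℚ) / K) := by
  have hK0 : 0 < K := by omega
  set q := (K - L) * m / K with hq
  have hqm : q ≤ m := by
    calc (K - L) * m / K ≤ K * m / K :=
          Nat.div_le_div_right (Nat.mul_le_mul_right m (Nat.sub_le K L))
      _ = m := Nat.mul_div_cancel_left m hK0
  refine ⟨q + 1, Nat.succ_le_succ hqm, ?_⟩
  have hS1 : ∑ i ∈ Finset.Ico (m + 1 - L) (min (q + 1) (K - L + 1)),
      (K - L).choose i * (L - 1).choose (m - i)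
      = ∑ i ∈ Finset.range (q + 1), aa K m L i := by
    refine Finset.sum_subset ?_ ?_
    · intro i hi
      rw [Finset.mem_Ico] at hi
      exact Finset.mem_range.2 (lt_of_lt_of_le hi.2 (min_le_left _ _))
    · intro i hi hni
      rw [Finset.mem_range] at hi
      rw [Finset.mem_Ico] at hni
      push_neg at hni
      by_cases hc : i < m + 1 - L
      · rw [Nat.choose_eq_zero_of_lt (show L - 1 < m - i by omega), Nat.mul_zero]
      · have h2 : K - L < i := by omega
        rw [Nat.choose_eq_zero_of_lt h2, Nat.zero_mul]
  have hS2 : ∑ i ∈ Finset.Icc (max (q + 1) (m - L)) (min m (K - L - 1)),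
      (K - L - 1).choose i * L.choose (m - i)
      = ∑ i ∈ Finset.Icc (q + 1) m, bb K m L i := by
    refine Finset.sum_subset ?_ ?_
    · intro i hi
      rw [Finset.mem_Icc] at hi ⊢
      omega
    · intro i hi hni
      rw [Finset.mem_Icc] at hi
      rw [Finset.mem_Icc] at hni
      push_neg at hni
      by_cases hc : i < m - L
      · rw [Nat.choose_eq_zero_of_lt (show L < m - i by omega), Nat.mul_zero]
      · have h2 : K - L - 1 < i := by omega
        rw [Nat.choose_eq_zero_of_lt h2, Nat.zero_mul]
  rw [hS1, hS2]
  have hcore := core_lt hK hm hm' hL hL' (K := K) (m := m) (L := L)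
  rw [← hq] at hcore
  have hCpos : (0 : ℚ) < (K.choose m : ℚ) := by
    exact_mod_cast Nat.choose_pos (show m ≤ K by omega)
  have hKq : (0 : ℚ) < (K : ℚ) := by exact_mod_cast hK0
  have hid : K.choose m * (K - m) = K * (K - 1).choose m := sub_mul_choose K m (by omega)
  have hidQ : (K.choose m : ℚ) * ((K : ℚ) - m) = (K : ℚ) * ((K - 1).choose m : ℚ) := by
    zify [show m ≤ K by omega] at hid
    exact_mod_cast hid
  have h2 : (2 : ℚ) - (m : ℚ) / K = 1 + ((K - 1).choose m : ℚ) / (K.choose m) := by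
    field_simp
    linear_combination hidQ
  have hSlt : ((∑ i ∈ Finset.range (q + 1), aa K m L i
      + ∑ i ∈ Finset.Icc (q + 1) m, bb K m L i : ℕ) : ℚ) < ((K - 1).choose m : ℚ) := by
    exact_mod_cast hcore
  have key : (1 : ℚ) + ((∑ i ∈ Finset.range (q + 1), aa K m L i
      + ∑ i ∈ Finset.Icc (q + 1) m, bb K m L i : ℕ) : ℚ) / (K.choose m)
      < 2 - (m : ℚ) / K := by
    rw [h2]
    gcongr
  exact ⟨key.le, fun _ => key⟩
end

section
/- Let V be a vector space over GF(2) (the field with two elements), let a : Finset ℕ → V be an assignment of vectors to finite index sets, and let 1 and ℓ be two distinct indices. For a finite set T of indices with 1 ∉ T and ℓ ∉ T, define M(T) = a(T ∪ S) + Σ_{t ∈ T} a(((T ∪ {1}) \ {t}) ∪ S) for a fixed finite set S disjoint from T ∪ {1, ℓ}. Then M(T) + Σ_{t ∈ T} M((T ∪ {ℓ}) \ {t}) = a(T ∪ S) + Σ_{t ∈ T} a(((T ∪ {ℓ}) \ {t}) ∪ S). -/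
private lemma sum_erase_symm_eq_zero {V : Type*} [AddCommGroup V]
    (char2 : ∀ x : V, x + x = 0) (T : Finset ℕ) (f : ℕ → ℕ → V)
    (hf : ∀ t ∈ T, ∀ s ∈ T, t ≠ s → f t s + f s t = 0) :
    ∑ t ∈ T, ∑ s ∈ T.erase t, f t s = 0 := by
  rw [Finset.sum_sigma']
  refine Finset.sum_involution (fun p _ => ⟨p.2, p.1⟩) ?_ ?_ ?_ ?_
  · rintro ⟨t, s⟩ hp
    rw [Finset.mem_sigma, Finset.mem_erase] at hp
    exact hf t hp.1 s hp.2.2 (Ne.symm hp.2.1)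
  · rintro ⟨t, s⟩ hp _ h
    rw [Finset.mem_sigma, Finset.mem_erase] at hp
    exact hp.2.1 (congrArg Sigma.fst h)
  · rintro ⟨t, s⟩ hp
    rw [Finset.mem_sigma, Finset.mem_erase] at hp ⊢
    exact ⟨hp.2.2, Ne.symm hp.2.1, hp.1⟩
  · rintro ⟨t, s⟩ hp
    rfl

/-- The key cancellation identity (Equation (1)): over a GF(2) vector space,
with `M(T') = a(T' ∪ S) + ∑_{t ∈ T'} a(((T' ∪ {1}) \ {t}) ∪ S)`,
`M(T) + ∑_{t ∈ T} M((T ∪ {ℓ}) \ {t}) = a(T ∪ S) + ∑_{t ∈ T} a(((T ∪ {ℓ}) \ {t}) ∪ S)`. -/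
theorem stmt_11 (V : Type*) [AddCommGroup V] [Module (ZMod 2) V]
    (a : Finset ℕ → V) (ℓ : ℕ) (hℓ : ℓ ≠ 1)
    (T S : Finset ℕ) (h1T : 1 ∉ T) (hℓT : ℓ ∉ T)
    (hS : Disjoint S (T ∪ {1, ℓ}))
    (M : Finset ℕ → V)
    (hM : ∀ T' : Finset ℕ,
      M T' = a (T' ∪ S) + ∑ t ∈ T', a (((T' ∪ {1}) \ {t}) ∪ S)) :
    M T + ∑ t ∈ T, M ((T ∪ {ℓ}) \ {t}) =
      a (T ∪ S) + ∑ t ∈ T, a (((T ∪ {ℓ}) \ {t}) ∪ S) := by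
  have char2 : ∀ x : V, x + x = 0 := by
    intro x
    have h2 : (2 : ZMod 2) • x = 0 := by
      have : (2 : ZMod 2) = 0 := by decide
      simp [this]
    simpa [two_smul] using h2
  simp only [hM]
  rw [Finset.sum_add_distrib]
  have hTt : ∀ t ∈ T, (T ∪ {ℓ}) \ {t} = insert ℓ (T.erase t) := by
    intro t ht
    have htℓ : ¬ t = ℓ := fun h => hℓT (h ▸ ht)
    ext x
    have hxℓ : x ∈ T → ¬ x = ℓ := fun hx h => hℓT (h ▸ hx)
    have c1 : ¬(x = ℓ ∧ x = t) := by omega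
    simp only [Finset.mem_sdiff, Finset.mem_union, Finset.mem_singleton,
      Finset.mem_insert, Finset.mem_erase]
    tauto
  have key : ∀ t ∈ T,
      ∑ s ∈ (T ∪ {ℓ}) \ {t}, a (((((T ∪ {ℓ}) \ {t}) ∪ {1}) \ {s}) ∪ S)
        = a (((T ∪ {1}) \ {t}) ∪ S)
          + ∑ s ∈ T.erase t, a (((((T ∪ {ℓ}) \ {t}) ∪ {1}) \ {s}) ∪ S) := by
    intro t ht
    have hℓnot : ℓ ∉ T.erase t := fun h => hℓT (Finset.mem_of_mem_erase h)
    rw [hTt t ht, Finset.sum_insert hℓnot]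
    have hset : (insert ℓ (T.erase t) ∪ {1}) \ {ℓ} = (T ∪ {1}) \ {t} := by
      have ht1 : ¬ (1 : ℕ) = t := fun h => h1T (h ▸ ht)
      have h1ℓ : ¬ (1 : ℕ) = ℓ := fun h => hℓ h.symm
      ext x
      have hxℓ : x ∈ T → ¬ x = ℓ := fun hx h => hℓT (h ▸ hx)
      have c1 : ¬(x = 1 ∧ x = t) := by omega
      have c2 : ¬(x = 1 ∧ x = ℓ) := by omega
      simp only [Finset.mem_sdiff, Finset.mem_union, Finset.mem_singleton,
        Finset.mem_insert, Finset.mem_erase]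
      tauto
    rw [hset]
  rw [Finset.sum_congr rfl key, Finset.sum_add_distrib]
  set A := ∑ t ∈ T, a (((T ∪ {1}) \ {t}) ∪ S) with hA
  set B := ∑ t ∈ T, a (((T ∪ {ℓ}) \ {t}) ∪ S) with hB
  set D := ∑ t ∈ T, ∑ s ∈ T.erase t,
      a (((((T ∪ {ℓ}) \ {t}) ∪ {1}) \ {s}) ∪ S) with hD
  have hD0 : D = 0 := by
    rw [hD]
    refine sum_erase_symm_eq_zero char2 T
      (fun t s => a (((((T ∪ {ℓ}) \ {t}) ∪ {1}) \ {s}) ∪ S)) ?_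
    intro t ht s hs hts
    have ht1 : t ≠ 1 := fun h => h1T (h ▸ ht)
    have hs1 : s ≠ 1 := fun h => h1T (h ▸ hs)
    have e : ∀ u : ℕ, u ≠ 1 → ∀ v : ℕ, v ≠ 1 →
        (((T ∪ {ℓ}) \ {u}) ∪ {1}) \ {v} = ((T ∪ {ℓ}) \ ({u} ∪ {v})) ∪ {1} := by
      intro u hu v hv
      ext x
      have c1 : ¬(x = 1 ∧ x = v) := by omega
      simp only [Finset.mem_sdiff, Finset.mem_union, Finset.mem_singleton]
      tauto
    have hsym : ((((T ∪ {ℓ}) \ {t}) ∪ {1}) \ {s}) ∪ S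
        = ((((T ∪ {ℓ}) \ {s}) ∪ {1}) \ {t}) ∪ S := by
      rw [e t ht1 s hs1, e s hs1 t ht1, Finset.union_comm ({t} : Finset ℕ) {s}]
    rw [hsym]
    exact char2 _
  rw [hD0]
  abel_nf
  rw [show (2 : ℤ) • A = A + A by rw [two_smul], char2 A]
  abel
end
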